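/- arXiv:1303.1613 — 4 statements merged into one kernel-verified Lean document; each statement's English description precedes it below -/
import Mathlib

section
/- In the algebra M of infinite binary sequences with Δ as defined, the Löb identity holds: Δ(Δα ⊃ α) = Δα for every α. -/
/-- The algebra of infinite binary sequences. -/
abbrev M := ℕ → Bool

/-- Pointwise boolean operations. -/
def mAnd (a b : M) : M := fun n => a n && b n
def mOr (a b : M) : M := fun n => a n || b n
def mImp (a b : M) : M := fun n => !a n || b n
def mNeg (a : M) : M := fun n => !a n
def mIff (a b : M) : M := fun n => a n == b n
def mZero : M := fun _ => false
def mOne : M := fun _ => true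

/-- The operator Δ: (Δα)(0)=1 and (Δα)(n+1)=α(0)∧⋯∧α(n). -/
def Delta (a : M) : M := fun n => decide (∀ k, k < n → a k = true)

def box (a : M) : M := mAnd a (Delta a)
def nabla (a : M) : M := box (mNeg (box (mNeg (box a))))

/-- Löb identity: Δ(Δα ⊃ α) = Δα. -/
theorem stmt2 (a : M) : Delta (mImp (Delta a) a) = Delta a := by
  funext n
  simp only [Delta, decide_eq_decide]
  simp only [mImp]
  constructor
  · intro h
    intro k hk
    induction k using Nat.strong_induction_on with
    | _ k ih =>
      have := h k hk
      simp only [Bool.or_eq_true, Bool.not_eq_true'] at this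
      rcases this with h1 | h1
      · exfalso
        simp only [Delta, decide_eq_false_iff_not] at h1
        exact h1 fun j hj => ih j hj (hj.trans hk)
      · exact h1
  · intro h k hk
    simp [h k hk]
end

section
/- Fix i ≥ 1 and an element c of M with c ≠ ¬Δⁱ0. Define F_¬(p,q) = (∇¬(p ↔ q) ∧ ((¬p ↔ q) ↔ c)) ∨ (∇(p ↔ q) ∧ ¬Δⁱ0). Then for all p, q in M: ¬p = q if and only if F_¬(p,q) = c. -/
lemma box_of_zero_false {a : M} (h : a 0 = false) : box a = mZero := by
  funext n
  cases n with
  | zero => simp [box, mAnd, Delta, mZero, h]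
  | succ m =>
    have : ¬ (∀ k, k < m + 1 → a k = true) := by
      intro hk
      have := hk 0 (Nat.succ_pos m)
      rw [h] at this; exact Bool.false_ne_true this
    simp [box, mAnd, Delta, mZero, this]
    exact fun _ => ⟨0, Nat.zero_le m, h⟩

lemma box_one : box mOne = mOne := by
  funext n; simp [box, mAnd, Delta, mOne]

lemma mNeg_zero : mNeg mZero = mOne := by funext n; simp [mNeg, mZero, mOne]

lemma nabla_eq (a : M) : nabla a = fun _ => a 0 := by
  unfold nabla
  cases h : a 0 with
  | false =>
    rw [box_of_zero_false h, mNeg_zero, box_one]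
    have : mNeg mOne = mZero := by funext n; simp [mNeg, mOne, mZero]
    rw [this, box_of_zero_false (by simp [mZero])]
    rfl
  | true =>
    have h0 : mNeg (box a) 0 = false := by
      simp [mNeg, box, mAnd, Delta, h]
    rw [box_of_zero_false h0, mNeg_zero, box_one]
    rfl

/-- ¬p = q iff F_¬(p,q) = c, where c ≠ ¬Δⁱ0. -/
theorem stmt14 (i : ℕ) (hi : 1 ≤ i) (c : M) (hc : c ≠ mNeg (Delta^[i] mZero))
    (p q : M) :
    mNeg p = q ↔
      mOr (mAnd (nabla (mNeg (mIff p q))) (mIff (mIff (mNeg p) q) c))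
          (mAnd (nabla (mIff p q)) (mNeg (Delta^[i] mZero))) = c := by
  rw [nabla_eq, nabla_eq]
  constructor
  · intro h
    subst h
    funext n
    simp only [mOr, mAnd, mIff, mNeg]
    cases p 0 <;> cases p n <;> cases c n <;> simp
  · intro h
    cases h0 : (p 0 == q 0) with
    | true =>
      exfalso
      apply hc
      rw [← h]
      funext n
      simp only [mOr, mAnd, mIff, mNeg, h0]
      simp
    | false =>
      funext n
      have h' := congrFun h n
      simp only [mOr, mAnd, mIff, mNeg, h0] at h'
      simp at h'
      cases hcn : c n <;> rw [hcn] at h' <;>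
        cases hp : p n <;> cases hq : q n <;> simp_all [mNeg]
end

section
/- Fix i ≥ 1 and an element c of M with c ≠ ¬Δⁱ0. Define F_Δ(p,q) = (∇q ∧ ((Δp ↔ q) ↔ c)) ∨ (¬∇q ∧ ¬Δⁱ0). Then for all p, q in M: Δp = q if and only if F_Δ(p,q) = c. -/
lemma box_eq_true (a : M) (n : ℕ) : box a n = true ↔ ∀ k ≤ n, a k = true := by
  simp only [box, mAnd, Delta, Bool.and_eq_true, decide_eq_true_eq]
  constructor
  · rintro ⟨h1, h2⟩ k hk
    rcases lt_or_eq_of_le hk with h | h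
    · exact h2 k h
    · subst h; exact h1
  · intro h; exact ⟨h n le_rfl, fun k hk => h k hk.le⟩

lemma nabla_apply (q : M) (n : ℕ) : nabla q n = q 0 := by
  cases h0 : q 0 with
  | true =>
    rw [show nabla q = box (mNeg (box (mNeg (box q)))) from rfl, box_eq_true]
    intro k _
    have : box (mNeg (box q)) k = false := by
      rw [Bool.eq_false_iff]
      intro hb
      have := (box_eq_true _ k).mp hb 0 (Nat.zero_le k)
      have hq0 : box q 0 = true := (box_eq_true q 0).mpr (by
        intro j hj; interval_cases j; exact h0)
      simp [mNeg, hq0] at this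
    simp [mNeg, this]
  | false =>
    rw [Bool.eq_false_iff]
    intro hb
    have hfalse : box (mNeg (box q)) 0 = false := by
      have := (box_eq_true _ n).mp hb 0 (Nat.zero_le n)
      simpa [mNeg, Bool.not_eq_true'] using this
    have hq0 : box q 0 = false := by
      rw [Bool.eq_false_iff]
      intro hb'
      exact absurd ((box_eq_true q 0).mp hb' 0 le_rfl) (by simp [h0])
    have htrue : box (mNeg (box q)) 0 = true := by
      rw [box_eq_true]
      intro j hj; interval_cases j; simp [mNeg, hq0]
    rw [hfalse] at htrue; exact absurd htrue (by simp)

/-- Δp = q iff F_Δ(p,q) = c, where c ≠ ¬Δⁱ0. -/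
theorem stmt15 (i : ℕ) (hi : 1 ≤ i) (c : M) (hc : c ≠ mNeg (Delta^[i] mZero))
    (p q : M) :
    Delta p = q ↔
      mOr (mAnd (nabla q) (mIff (mIff (Delta p) q) c))
          (mAnd (mNeg (nabla q)) (mNeg (Delta^[i] mZero))) = c := by
  cases h0 : q 0 with
  | false =>
    constructor
    · intro h
      have : Delta p 0 = q 0 := by rw [h]
      simp [Delta, h0] at this
    · intro h
      exfalso
      apply hc
      rw [← h]
      funext n
      simp [mOr, mAnd, mNeg, nabla_apply, h0]
  | true =>
    constructor
    · intro h
      funext n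
      simp [mOr, mAnd, mNeg, mIff, nabla_apply, h0, h]
    · intro h
      funext n
      have hn := congrFun h n
      simp [mOr, mAnd, mNeg, mIff, nabla_apply, h0] at hn
      revert hn
      cases Delta p n <;> cases q n <;> cases c n <;> simp
end

section
/- There exist infinitely many pairwise distinct clones (composition-closed classes containing the projections) of finitary operations on M, each of which is proper (excludes some operation): namely, the classes K₁, K₂, … of operations preserving ¬Δ¹0, ¬Δ²0, … respectively, are pairwise distinct, each contains all projections and is closed under composition, and each excludes the unary operation Δ. -/
/-- The class K_i of finitary operations on M preserving ¬Δⁱ0. -/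
def Kclass (i : ℕ) : Set (Σ n : ℕ, (Fin n → M) → M) :=
  {F | F.2 (fun _ => mNeg (Delta^[i] mZero)) = mNeg (Delta^[i] mZero)}

lemma delta_iter (i : ℕ) : Delta^[i] mZero = fun n => decide (n < i) := by
  induction i with
  | zero => funext n; simp [mZero]
  | succ i ih =>
    rw [Function.iterate_succ_apply', ih]
    funext n
    simp only [Delta, decide_eq_true_eq, decide_eq_decide]
    constructor
    · intro h; by_contra hn; have := h i (by omega); omega
    · intro h k hk; omega

lemma neg_delta_iter (i : ℕ) : mNeg (Delta^[i] mZero) = fun n => decide (i ≤ n) := by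
  rw [delta_iter]; funext n; simp only [mNeg, ← decide_not, decide_eq_decide]; omega

/-- The classes K₁, K₂, … are pairwise distinct proper clones:
each contains all projections, is closed under composition, and
excludes the unary operation Δ. -/
theorem stmt19 :
    (∀ i : ℕ, 1 ≤ i →
      (∀ (n : ℕ) (k : Fin n), (⟨n, fun x => x k⟩ : Σ n, (Fin n → M) → M) ∈ Kclass i) ∧
      (∀ (n m : ℕ) (F : (Fin n → M) → M) (G : Fin n → ((Fin m → M) → M)),
        (⟨n, F⟩ : Σ n, (Fin n → M) → M) ∈ Kclass i →
        (∀ k, (⟨m, G k⟩ : Σ n, (Fin n → M) → M) ∈ Kclass i) →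
        (⟨m, fun x => F (fun k => G k x)⟩ : Σ n, (Fin n → M) → M) ∈ Kclass i) ∧
      (⟨1, fun x => Delta (x 0)⟩ : Σ n, (Fin n → M) → M) ∉ Kclass i) ∧
    (∀ i j : ℕ, 1 ≤ i → 1 ≤ j → i ≠ j → Kclass i ≠ Kclass j) := by
  constructor
  · intro i hi
    refine ⟨fun n k => rfl, ?_, ?_⟩
    · intro n m F G hF hG
      simp only [Kclass, Set.mem_setOf_eq] at *
      simp only [funext fun k => hG k, hF]
    · intro h
      simp only [Kclass, Set.mem_setOf_eq, neg_delta_iter] at h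
      have := congrFun h 0
      simp only [Delta, Nat.not_lt_zero] at this
      simp at this
      omega
  · intro i j hi hj hij h
    have hmem : (⟨1, fun _ => mNeg (Delta^[i] mZero)⟩ : Σ n, (Fin n → M) → M) ∈ Kclass i := rfl
    rw [h] at hmem
    have : mNeg (Delta^[i] mZero) = mNeg (Delta^[j] mZero) := hmem
    rw [neg_delta_iter, neg_delta_iter] at this
    have h1 := congrFun this i
    have h2 := congrFun this j
    simp only [decide_eq_decide] at h1 h2
    omega
end
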